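/- arXiv:1902.02697 — 2 statements merged into one kernel-verified Lean document; each statement's English description precedes it below -/
import Mathlib

section
/- Setting y = 1 in the functional equation kernel: the quantity 1 − φ₃(x,1)/x evaluated appropriately yields the conservation-of-flow relation λ₁ + s₂l₂⁺(1 − Π(1,0)) = (s₁ + s̄₁s̄₂α₁ᾱ₂)(1 − Π(1,0) − Π(0,1) + Π(0,0)) + (s₁ + s̄₁α₁)(Π(1,0) − Π(0,0)), provided the functional equation Π(x,y)[xy − φ₃(x,y)] = [yφ₁(x,y) − φ₃(x,y)][Π(x,0) − Π(0,0)] + [xφ₂(x,y) − φ₃(x,y)][Π(0,y) − Π(0,0)] + [xyH(x,y) − φ₃(x,y)]Π(0,0) holds for all |x|,|y| ≤ 1, with Π a probability generating function (Π(1,1)=1) and the φ's, H as defined, H differentiable at (1,1) with ∂ₓH(1,1)=λ₁, ∂_yH(1,1)=λ₂. -/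
noncomputable def phi1 (H : ℝ → ℝ → ℝ) (s1 α1 lm1 lp1 : ℝ) (x y : ℝ) : ℝ :=
  H x y * ((1 - s1) * ((1 - α1) * x + α1) + s1 * (lm1 + lp1 * y))

noncomputable def phi2 (H : ℝ → ℝ → ℝ) (s2 α2 lm2 lp2 : ℝ) (x y : ℝ) : ℝ :=
  H x y * ((1 - s2) * ((1 - α2) * y + α2) + s2 * (lm2 + lp2 * x))

noncomputable def phi3 (H : ℝ → ℝ → ℝ) (s1 s2 α1 α2 lm1 lp1 lm2 lp2 : ℝ) (x y : ℝ) : ℝ :=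
  H x y * ((1 - s1) * (1 - s2) * (x * y * ((1 - α1) * (1 - α2) + α1 * α2)
      + α1 * (1 - α2) * y + (1 - α1) * α2 * x)
    + s1 * (1 - s2) * y * (lm1 + lp1 * y)
    + s2 * (1 - s1) * x * (lm2 + lp2 * x)
    + s1 * s2 * (lm1 * lm2 + lp1 * lm2 * y + lm1 * lp2 * x + lp1 * lp2 * x * y))

lemma affq (a b c : ℝ) : HasDerivAt (fun x : ℝ => a + b * x + c * (x * x)) (b + 2 * c) 1 := by
  have h1 : HasDerivAt (fun x : ℝ => a + b * x) b 1 := by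
    simpa using ((hasDerivAt_id (1 : ℝ)).const_mul b).const_add a
  have h2 : HasDerivAt (fun x : ℝ => c * (x * x)) (2 * c) 1 := by
    have := ((hasDerivAt_id (1 : ℝ)).mul (hasDerivAt_id (1 : ℝ))).const_mul c
    simp only [_root_.Pi.mul_apply, id] at this
    exact this.congr_deriv (by ring)
  exact h1.add h2

/-- Setting `y = 1` in the functional equation and differentiating at `x = 1`
yields the first conservation-of-flow relation. -/
theorem stmt6 (s1 s2 α1 α2 lm1 lp1 lm2 lp2 lam1 lam2 : ℝ) (Pi H : ℝ → ℝ → ℝ)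
    (hs1 : 0 ≤ s1) (hs1' : s1 ≤ 1) (hs2 : 0 ≤ s2) (hs2' : s2 ≤ 1)
    (hα1 : 0 ≤ α1) (hα1' : α1 ≤ 1) (hα2 : 0 ≤ α2) (hα2' : α2 ≤ 1)
    (hl1 : 0 ≤ lp1) (hl1' : lm1 + lp1 = 1) (hl2 : 0 ≤ lp2) (hl2' : lm2 + lp2 = 1)
    (hH11 : H 1 1 = 1) (hPi11 : Pi 1 1 = 1)
    (hFE : ∀ x y : ℝ, |x| ≤ 1 → |y| ≤ 1 →
      Pi x y * (x * y - phi3 H s1 s2 α1 α2 lm1 lp1 lm2 lp2 x y)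
        = (y * phi1 H s1 α1 lm1 lp1 x y - phi3 H s1 s2 α1 α2 lm1 lp1 lm2 lp2 x y)
            * (Pi x 0 - Pi 0 0)
          + (x * phi2 H s2 α2 lm2 lp2 x y - phi3 H s1 s2 α1 α2 lm1 lp1 lm2 lp2 x y)
            * (Pi 0 y - Pi 0 0)
          + (x * y * H x y - phi3 H s1 s2 α1 α2 lm1 lp1 lm2 lp2 x y) * Pi 0 0)
    (hd1 : ∃ p : ℝ, HasDerivAt (fun x => Pi x 1) p 1)
    (hd0 : ∃ q : ℝ, HasDerivAt (fun x => Pi x 0) q 1)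
    (hdH1 : HasDerivAt (fun x => H x 1) lam1 1)
    (hdH2 : HasDerivAt (fun y => H 1 y) lam2 1) :
    lam1 + s2 * lp2 * (1 - Pi 1 0)
      = (s1 + (1 - s1) * (1 - s2) * α1 * (1 - α2)) * (1 - Pi 1 0 - Pi 0 1 + Pi 0 0)
        + (s1 + (1 - s1) * α1) * (Pi 1 0 - Pi 0 0) := by
  obtain ⟨p, hp⟩ := hd1
  obtain ⟨q, hq⟩ := hd0
  have hm1 : lm1 = 1 - lp1 := by linarith
  have hm2 : lm2 = 1 - lp2 := by linarith
  subst hm1 hm2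
  -- coefficients of the quadratics (in x) at y = 1
  -- phi3 x 1 = H x 1 * (a3 + b3 x + c3 x^2)
  -- phi1 x 1 = H x 1 * (a1 + b1 x)
  -- x * phi2 x 1 = H x 1 * (b2 x + c2 x^2)
  -- with:
  --  a3 = (1-s1)(1-s2)α1(1-α2) + s1(1-s2) + s1 s2 (1-lp2)
  --  b3 = (1-s1)(1-s2)((1-α1)(1-α2)+α1α2+(1-α1)α2) + s2(1-s1)(1-lp2) + s1 s2 lp2
  --  c3 = s2(1-s1)lp2 ;  a1 = (1-s1)α1 + s1 ; b1 = (1-s1)(1-α1)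
  --  b2 = 1 - s2*lp2 ; c2 = s2*lp2
  have hF :=
    (((hp.mul ((hasDerivAt_id (1 : ℝ)).sub (hdH1.mul (affq
        ((1-s1)*(1-s2)*α1*(1-α2) + s1*(1-s2) + s1*s2*(1-lp2))
        ((1-s1)*(1-s2)*((1-α1)*(1-α2)+α1*α2+(1-α1)*α2) + s2*(1-s1)*(1-lp2) + s1*s2*lp2)
        (s2*(1-s1)*lp2))))).sub
      ((hq.sub_const (Pi 0 0)).mul (hdH1.mul (affq
        (((1-s1)*α1 + s1) - ((1-s1)*(1-s2)*α1*(1-α2) + s1*(1-s2) + s1*s2*(1-lp2)))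
        (((1-s1)*(1-α1)) - ((1-s1)*(1-s2)*((1-α1)*(1-α2)+α1*α2+(1-α1)*α2) + s2*(1-s1)*(1-lp2) + s1*s2*lp2))
        (-(s2*(1-s1)*lp2)))))).sub
      ((hdH1.mul (affq
        (-((1-s1)*(1-s2)*α1*(1-α2) + s1*(1-s2) + s1*s2*(1-lp2)))
        ((1 - s2*lp2) - ((1-s1)*(1-s2)*((1-α1)*(1-α2)+α1*α2+(1-α1)*α2) + s2*(1-s1)*(1-lp2) + s1*s2*lp2))
        (s2*lp2 - s2*(1-s1)*lp2))).const_mul (Pi 0 1 - Pi 0 0))).sub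
      ((hdH1.mul (affq
        (-((1-s1)*(1-s2)*α1*(1-α2) + s1*(1-s2) + s1*s2*(1-lp2)))
        (1 - ((1-s1)*(1-s2)*((1-α1)*(1-α2)+α1*α2+(1-α1)*α2) + s2*(1-s1)*(1-lp2) + s1*s2*lp2))
        (-(s2*(1-s1)*lp2)))).const_mul (Pi 0 0))
  have hz : ∀ x ∈ Set.Icc (-1 : ℝ) 1,
      Pi x 1 * (x - H x 1 *
          ((1-s1)*(1-s2)*α1*(1-α2) + s1*(1-s2) + s1*s2*(1-lp2)
            + ((1-s1)*(1-s2)*((1-α1)*(1-α2)+α1*α2+(1-α1)*α2) + s2*(1-s1)*(1-lp2) + s1*s2*lp2) * x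
            + (s2*(1-s1)*lp2) * (x*x)))
        - (Pi x 0 - Pi 0 0) * (H x 1 *
          ((((1-s1)*α1 + s1) - ((1-s1)*(1-s2)*α1*(1-α2) + s1*(1-s2) + s1*s2*(1-lp2)))
            + ((((1-s1)*(1-α1)) - ((1-s1)*(1-s2)*((1-α1)*(1-α2)+α1*α2+(1-α1)*α2) + s2*(1-s1)*(1-lp2) + s1*s2*lp2))) * x
            + (-(s2*(1-s1)*lp2)) * (x*x)))
        - (Pi 0 1 - Pi 0 0) * (H x 1 *
          ((-((1-s1)*(1-s2)*α1*(1-α2) + s1*(1-s2) + s1*s2*(1-lp2)))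
            + (((1 - s2*lp2) - ((1-s1)*(1-s2)*((1-α1)*(1-α2)+α1*α2+(1-α1)*α2) + s2*(1-s1)*(1-lp2) + s1*s2*lp2))) * x
            + (s2*lp2 - s2*(1-s1)*lp2) * (x*x)))
        - Pi 0 0 * (H x 1 *
          ((-((1-s1)*(1-s2)*α1*(1-α2) + s1*(1-s2) + s1*s2*(1-lp2)))
            + ((1 - ((1-s1)*(1-s2)*((1-α1)*(1-α2)+α1*α2+(1-α1)*α2) + s2*(1-s1)*(1-lp2) + s1*s2*lp2))) * x
            + (-(s2*(1-s1)*lp2)) * (x*x))) = 0 := by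
    intro x hx
    have h := hFE x 1 (abs_le.2 ⟨hx.1, hx.2⟩) (by norm_num)
    simp only [phi1, phi2, phi3] at h
    linear_combination h
  have U : UniqueDiffWithinAt ℝ (Set.Icc (-1 : ℝ) 1) 1 :=
    (uniqueDiffOn_Icc (by norm_num : (-1 : ℝ) < 1)) 1 (by norm_num)
  have h1 := hF.hasDerivWithinAt (s := Set.Icc (-1 : ℝ) 1)
  have h2 := (hasDerivWithinAt_const (1 : ℝ) (Set.Icc (-1 : ℝ) 1) (0 : ℝ)).congr hz
    (hz 1 (by norm_num))
  have hD := (h1.derivWithin U).symm.trans (h2.derivWithin U)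
  simp only [_root_.Pi.mul_apply, _root_.Pi.sub_apply, id_eq, hPi11, hH11] at hD
  linear_combination -hD
end

section
/- Under the functional-equation consequences of the symmetric system, the mean queue length satisfies Π₁(1,1) = [λ(1−λ) + s·l⁺·(λ+s·l⁺)/(s+s̄²αᾱ) + Π₁(1,0)·(s̄²αᾱ − s̄α − s·l⁺)] / (s + s̄²αᾱ − λ − s·l⁺), given the conservation relation (3.3), the balance condition s·l⁺·(λ+s·l⁺)/(s+s̄²αᾱ) = s·s̄·l⁺·[1−Π(1,0)−Π(0,1)+Π(0,0)] + s·l⁺·[Π(1,0)−Π(0,0)], the symmetry Π(1,0)=Π(0,1), and the second-moment relation from differentiating the functional equation. -/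
/-- derivative of a linear function -/
lemma lin_deriv (a b x : ℝ) : HasDerivAt (fun t : ℝ => a + b * t) b x := by
  have h := ((hasDerivAt_id x).const_mul b).const_add a
  exact h.congr_deriv (mul_one b)

/-- derivative of a quadratic function -/
lemma quad_deriv (a b c x : ℝ) : HasDerivAt (fun t : ℝ => a + b * t + c * t ^ 2)
    (b + 2 * c * x) x := by
  have h2 : HasDerivAt (fun t : ℝ => t ^ 2) (2 * x) x := by
    simpa using hasDerivAt_pow 2 x
  have h := (lin_deriv a b x).add (h2.const_mul c)
  exact h.congr_deriv (by ring)

/-- If a function vanishing on `[0,1]` has a (two-sided) derivative at `1`,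
that derivative is `0`. -/
lemma left_zero (f : ℝ → ℝ) (d : ℝ) (hf : HasDerivAt f d 1)
    (h0 : ∀ x : ℝ, 0 ≤ x → x ≤ 1 → f x = 0) : d = 0 := by
  have hu : UniqueDiffWithinAt ℝ (Set.Iic (1:ℝ)) 1 :=
    (uniqueDiffOn_Iic (1:ℝ)) 1 (by simp)
  have hmem : Set.Ioo (0:ℝ) 2 ∈ nhds (1:ℝ) :=
    isOpen_Ioo.mem_nhds (by norm_num)
  have hev : f =ᶠ[nhdsWithin 1 (Set.Iic 1)] fun _ => (0:ℝ) := by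
    filter_upwards [nhdsWithin_le_nhds hmem, self_mem_nhdsWithin] with x hx1 hx2
    exact h0 x hx1.1.le hx2
  have hzero : HasDerivWithinAt (fun _ => (0:ℝ)) 0 (Set.Iic (1:ℝ)) 1 := hasDerivWithinAt_const (1:ℝ) _ (0:ℝ)
  have hfw0 : HasDerivWithinAt f 0 (Set.Iic 1) 1 :=
    hzero.congr_of_eventuallyEq hev (by simpa using h0 1 (by norm_num) le_rfl)
  have h1 := hf.hasDerivWithinAt.derivWithin hu
  have h2 := hfw0.derivWithin hu
  rw [h1] at h2; exact h2

/-- If a function vanishing on `[-1,1]` has a derivative at an interior point,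
that derivative is `0`. -/
lemma int_zero (f : ℝ → ℝ) (d x : ℝ) (hx1 : -1 < x) (hx2 : x < 1) (hf : HasDerivAt f d x)
    (h0 : ∀ t : ℝ, -1 ≤ t → t ≤ 1 → f t = 0) : d = 0 := by
  have hev : f =ᶠ[nhds x] fun _ => (0:ℝ) := by
    filter_upwards [isOpen_Ioo.mem_nhds (Set.mem_Ioo.2 ⟨hx1, hx2⟩)] with t ht
    exact h0 t ht.1.le ht.2.le
  exact hf.unique ((hasDerivAt_const x (0:ℝ)).congr_of_eventuallyEq hev)

/-- Second-order consequence at `x = 1` of a functional identity on `[-1,1]`. -/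
lemma aux_second (P Q h dP dQ dh : ℝ → ℝ) (A B ka0 ka1 kb0 kb1 kc0 kc1 kc2 L2 M2 : ℝ)
    (hF0 : ∀ x : ℝ, |x| ≤ 1 →
      P x * (x - h x * (kc0 + kc1 * x + kc2 * x ^ 2))
        - h x * ((ka0 + ka1 * x) - (kc0 + kc1 * x + kc2 * x ^ 2)) * (Q x - A)
        - h x * (x * (kb0 + kb1 * x) - (kc0 + kc1 * x + kc2 * x ^ 2)) * (B - A)
        - h x * (x - (kc0 + kc1 * x + kc2 * x ^ 2)) * A = 0)
    (hP : ∀ x : ℝ, |x| ≤ 1 → HasDerivAt P (dP x) x)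
    (hQ : ∀ x : ℝ, |x| ≤ 1 → HasDerivAt Q (dQ x) x)
    (hh : ∀ x : ℝ, |x| ≤ 1 → HasDerivAt h (dh x) x)
    (h2P : HasDerivAt dP L2 1) (h2Q : HasDerivAt dQ M2 1) (h2h : HasDerivAt dh 0 1) :
    L2 * (1 - h 1 * (kc0 + kc1 + kc2))
      + 2 * dP 1 * (1 - dh 1 * (kc0 + kc1 + kc2) - h 1 * (kc1 + 2 * kc2))
      + P 1 * (-2 * dh 1 * (kc1 + 2 * kc2) - 2 * h 1 * kc2)
      - ((2 * dh 1 * (ka1 - (kc1 + 2 * kc2)) - 2 * h 1 * kc2) * (Q 1 - A)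
          + 2 * (dh 1 * ((ka0 + ka1) - (kc0 + kc1 + kc2)) + h 1 * (ka1 - (kc1 + 2 * kc2))) * dQ 1
          + h 1 * ((ka0 + ka1) - (kc0 + kc1 + kc2)) * M2)
      - (2 * dh 1 * ((kb0 + kb1) + kb1 - (kc1 + 2 * kc2)) + h 1 * (2 * kb1 - 2 * kc2)) * (B - A)
      - (2 * dh 1 * (1 - (kc1 + 2 * kc2)) - 2 * h 1 * kc2) * A = 0 := by
  -- the first derivative of the identity, at every point of `[-1,1]`
  have hD1 : ∀ x : ℝ, |x| ≤ 1 → HasDerivAt (fun t : ℝ =>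
      P t * (t - h t * (kc0 + kc1 * t + kc2 * t ^ 2))
        - h t * ((ka0 + ka1 * t) - (kc0 + kc1 * t + kc2 * t ^ 2)) * (Q t - A)
        - h t * (t * (kb0 + kb1 * t) - (kc0 + kc1 * t + kc2 * t ^ 2)) * (B - A)
        - h t * (t - (kc0 + kc1 * t + kc2 * t ^ 2)) * A)
      (dP x * (x - h x * (kc0 + kc1 * x + kc2 * x ^ 2))
          + P x * (1 - (dh x * (kc0 + kc1 * x + kc2 * x ^ 2) + h x * (kc1 + 2 * kc2 * x)))
        - ((dh x * ((ka0 + ka1 * x) - (kc0 + kc1 * x + kc2 * x ^ 2))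
              + h x * (ka1 - (kc1 + 2 * kc2 * x))) * (Q x - A)
            + h x * ((ka0 + ka1 * x) - (kc0 + kc1 * x + kc2 * x ^ 2)) * dQ x)
        - (dh x * (x * (kb0 + kb1 * x) - (kc0 + kc1 * x + kc2 * x ^ 2))
            + h x * ((1 * (kb0 + kb1 * x) + x * kb1) - (kc1 + 2 * kc2 * x))) * (B - A)
        - (dh x * (x - (kc0 + kc1 * x + kc2 * x ^ 2))
            + h x * (1 - (kc1 + 2 * kc2 * x))) * A) x := by
    intro x hx
    have hc := quad_deriv kc0 kc1 kc2 x
    have hdcx : HasDerivAt (fun t : ℝ => kc1 + 2 * kc2 * t) (2 * kc2) x := lin_deriv kc1 (2 * kc2) x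
    have hhx := hh x hx
    have hPx := hP x hx
    have hQx := hQ x hx
    have ha := lin_deriv ka0 ka1 x
    have hb := lin_deriv kb0 kb1 x
    have h1 := hPx.mul ((hasDerivAt_id x).sub (hhx.mul hc))
    have h2 := (hhx.mul (ha.sub hc)).mul (hQx.sub_const A)
    have h3 := (hhx.mul (((hasDerivAt_id x).mul hb).sub hc)).mul_const (B - A)
    have h4 := (hhx.mul ((hasDerivAt_id x).sub hc)).mul_const A
    exact ((h1.sub h2).sub h3).sub h4
  -- rephrase the vanishing hypothesis
  have hF0' : ∀ x : ℝ, -1 ≤ x → x ≤ 1 →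
      P x * (x - h x * (kc0 + kc1 * x + kc2 * x ^ 2))
        - h x * ((ka0 + ka1 * x) - (kc0 + kc1 * x + kc2 * x ^ 2)) * (Q x - A)
        - h x * (x * (kb0 + kb1 * x) - (kc0 + kc1 * x + kc2 * x ^ 2)) * (B - A)
        - h x * (x - (kc0 + kc1 * x + kc2 * x ^ 2)) * A = 0 := by
    intro x h1 h2; exact hF0 x (abs_le.2 ⟨h1, h2⟩)
  -- the first derivative vanishes on `[0,1]`
  have hD0 : ∀ x : ℝ, 0 ≤ x → x ≤ 1 →
      dP x * (x - h x * (kc0 + kc1 * x + kc2 * x ^ 2))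
          + P x * (1 - (dh x * (kc0 + kc1 * x + kc2 * x ^ 2) + h x * (kc1 + 2 * kc2 * x)))
        - ((dh x * ((ka0 + ka1 * x) - (kc0 + kc1 * x + kc2 * x ^ 2))
              + h x * (ka1 - (kc1 + 2 * kc2 * x))) * (Q x - A)
            + h x * ((ka0 + ka1 * x) - (kc0 + kc1 * x + kc2 * x ^ 2)) * dQ x)
        - (dh x * (x * (kb0 + kb1 * x) - (kc0 + kc1 * x + kc2 * x ^ 2))
            + h x * ((1 * (kb0 + kb1 * x) + x * kb1) - (kc1 + 2 * kc2 * x))) * (B - A)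
        - (dh x * (x - (kc0 + kc1 * x + kc2 * x ^ 2))
            + h x * (1 - (kc1 + 2 * kc2 * x))) * A = 0 := by
    intro x h0x h1x
    rcases eq_or_lt_of_le h1x with rfl | hlt
    · exact left_zero _ _ (hD1 1 (by rw [abs_one])) fun t ht1 ht2 => hF0' t (by linarith) ht2
    · exact int_zero _ _ x (by linarith) hlt (hD1 x (abs_le.2 ⟨by linarith, h1x⟩)) hF0'
  -- second derivative at `1`
  have h1le : |(1:ℝ)| ≤ 1 := by rw [abs_one]
  have hc := quad_deriv kc0 kc1 kc2 (1:ℝ)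
  have hdc : HasDerivAt (fun t : ℝ => kc1 + 2 * kc2 * t) (2 * kc2) 1 := lin_deriv kc1 (2 * kc2) 1
  have hh1 := hh 1 h1le
  have hP1 := hP 1 h1le
  have hQ1 := hQ 1 h1le
  have ha := lin_deriv ka0 ka1 (1:ℝ)
  have hb := lin_deriv kb0 kb1 (1:ℝ)
  have T1 := (h2P.mul ((hasDerivAt_id (1:ℝ)).sub (hh1.mul hc))).add
    (hP1.mul (((h2h.mul hc).add (hh1.mul hdc)).const_sub 1))
  have T2 := (((h2h.mul (ha.sub hc)).add (hh1.mul (hdc.const_sub ka1))).mul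
      (hQ1.sub_const A)).add ((hh1.mul (ha.sub hc)).mul h2Q)
  have T3 := ((h2h.mul (((hasDerivAt_id (1:ℝ)).mul hb).sub hc)).add
      (hh1.mul ((hb.add ((hasDerivAt_id (1:ℝ)).mul_const kb1)).sub hdc))).mul_const (B - A)
  have T4 := ((h2h.mul ((hasDerivAt_id (1:ℝ)).sub hc)).add
      (hh1.mul (hdc.const_sub 1))).mul_const A
  have hDD := ((T1.sub T2).sub T3).sub T4
  have hG := left_zero _ _ hDD (fun x hx0 hx1 => by
    have h := hD0 x hx0 hx1
    simp only [id_eq, Pi.mul_apply, Pi.add_apply, Pi.sub_apply]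
    linear_combination h)
  simp only [id_eq, Pi.mul_apply, Pi.add_apply, Pi.sub_apply] at hG
  linear_combination hG

/-- Symmetric system: the mean queue length `Π₁(1,1)` formula, obtained from the
functional equation together with the conservation relation, the balance condition
and the symmetry `Π(1,0) = Π(0,1)`. -/
theorem stmt8 (s α lm lp lam : ℝ) (Pi H : ℝ → ℝ → ℝ) (dPi1 dPi0 dH : ℝ → ℝ)
    (hs0 : 0 < s) (hs1 : s < 1) (ha0 : 0 < α) (ha1 : α < 1)
    (hlp0 : 0 ≤ lp) (hl : lp + lm = 1) (hlam : 0 ≤ lam)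
    (hstab : lam + s * lp < s + (1 - s) ^ 2 * α * (1 - α))
    (hH11 : H 1 1 = 1) (hPi11 : Pi 1 1 = 1)
    (hFE : ∀ x y : ℝ, |x| ≤ 1 → |y| ≤ 1 →
      Pi x y * (x * y - phi3 H s s α α lm lp lm lp x y)
        = (y * phi1 H s α lm lp x y - phi3 H s s α α lm lp lm lp x y)
            * (Pi x 0 - Pi 0 0)
          + (x * phi2 H s α lm lp x y - phi3 H s s α α lm lp lm lp x y)
            * (Pi 0 y - Pi 0 0)
          + (x * y * H x y - phi3 H s s α α lm lp lm lp x y) * Pi 0 0)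
    -- first and second order differentiability of the sections at hand
    (hd1 : ∀ x : ℝ, |x| ≤ 1 → HasDerivAt (fun t => Pi t 1) (dPi1 x) x)
    (hd0 : ∀ x : ℝ, |x| ≤ 1 → HasDerivAt (fun t => Pi t 0) (dPi0 x) x)
    (hdH : ∀ x : ℝ, |x| ≤ 1 → HasDerivAt (fun t => H t 1) (dH x) x)
    (hdH1 : dH 1 = lam)
    (h2H : HasDerivAt dH 0 1)  -- Bernoulli arrivals: ∂²ₓH(1,1) = 0
    (h2P1 : ∃ L2 : ℝ, HasDerivAt dPi1 L2 1)
    (h2P0 : ∃ M2 : ℝ, HasDerivAt dPi0 M2 1)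
    -- symmetry of the system
    (hsym : Pi 1 0 = Pi 0 1)
    -- conservation relation (s1)
    (hcons : Pi 1 0 * ((1 - s) * α - 2 * (1 - s) ^ 2 * α * (1 - α) - s * lm)
        + Pi 0 0 * ((1 - s) ^ 2 * α * (1 - α) - (1 - s) * α)
        = lam + s * lp - (s + (1 - s) ^ 2 * α * (1 - α)))
    -- balance condition (s3)
    (hbal : s * lp * (lam + s * lp) / (s + (1 - s) ^ 2 * α * (1 - α))
        = s * (1 - s) * lp * (1 - Pi 1 0 - Pi 0 1 + Pi 0 0)
          + s * lp * (Pi 1 0 - Pi 0 0)) :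
    dPi1 1 = (lam * (1 - lam)
        + s * lp * (lam + s * lp) / (s + (1 - s) ^ 2 * α * (1 - α))
        + dPi0 1 * ((1 - s) ^ 2 * α * (1 - α) - (1 - s) * α - s * lp))
      / (s + (1 - s) ^ 2 * α * (1 - α) - lam - s * lp) := by
  obtain ⟨L2, h2P1'⟩ := h2P1
  obtain ⟨M2, h2P0'⟩ := h2P0
  have hlm : lm = 1 - lp := by linarith
  subst hlm
  -- the functional equation at y = 1, rewritten in the canonical polynomial form
  have hF0 : ∀ x : ℝ, |x| ≤ 1 →
      (fun t => Pi t 1) x * (x - (fun t => H t 1) x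
          * (((1 - s) ^ 2 * α * (1 - α) + s * (1 - s) + s ^ 2 * (1 - lp))
            + ((1 - s) ^ 2 * (1 - α * (1 - α)) + s * (1 - s) * (1 - lp) + s ^ 2 * lp) * x
            + (s * (1 - s) * lp) * x ^ 2))
        - (fun t => H t 1) x * ((((1 - s) * α + s) + ((1 - s) * (1 - α)) * x)
            - (((1 - s) ^ 2 * α * (1 - α) + s * (1 - s) + s ^ 2 * (1 - lp))
              + ((1 - s) ^ 2 * (1 - α * (1 - α)) + s * (1 - s) * (1 - lp) + s ^ 2 * lp) * x
              + (s * (1 - s) * lp) * x ^ 2)) * ((fun t => Pi t 0) x - Pi 0 0)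
        - (fun t => H t 1) x * (x * (((1 - s) + s * (1 - lp)) + (s * lp) * x)
            - (((1 - s) ^ 2 * α * (1 - α) + s * (1 - s) + s ^ 2 * (1 - lp))
              + ((1 - s) ^ 2 * (1 - α * (1 - α)) + s * (1 - s) * (1 - lp) + s ^ 2 * lp) * x
              + (s * (1 - s) * lp) * x ^ 2)) * (Pi 0 1 - Pi 0 0)
        - (fun t => H t 1) x * (x
            - (((1 - s) ^ 2 * α * (1 - α) + s * (1 - s) + s ^ 2 * (1 - lp))
              + ((1 - s) ^ 2 * (1 - α * (1 - α)) + s * (1 - s) * (1 - lp) + s ^ 2 * lp) * x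
              + (s * (1 - s) * lp) * x ^ 2)) * Pi 0 0 = 0 := by
    intro x hx
    have h := hFE x 1 hx (by rw [abs_one])
    simp only [phi1, phi2, phi3] at h
    simp only []
    linear_combination h
  have hG := aux_second (fun t => Pi t 1) (fun t => Pi t 0) (fun t => H t 1) dPi1 dPi0 dH
    (Pi 0 0) (Pi 0 1)
    ((1 - s) * α + s) ((1 - s) * (1 - α))
    ((1 - s) + s * (1 - lp)) (s * lp)
    ((1 - s) ^ 2 * α * (1 - α) + s * (1 - s) + s ^ 2 * (1 - lp))
    ((1 - s) ^ 2 * (1 - α * (1 - α)) + s * (1 - s) * (1 - lp) + s ^ 2 * lp)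
    (s * (1 - s) * lp) L2 M2 hF0 hd1 hd0 hdH h2P1' h2P0' h2H
  simp only [hH11, hPi11, hdH1] at hG
  have h1a : (0:ℝ) < 1 - α := by linarith
  have h1s : (0:ℝ) < 1 - s := by linarith
  have hE : (0:ℝ) < s + (1 - s) ^ 2 * α * (1 - α) := by
    have := mul_pos (mul_pos (pow_pos h1s 2) ha0) h1a
    linarith
  have hD : (0:ℝ) < s + (1 - s) ^ 2 * α * (1 - α) - lam - s * lp := by linarith
  rw [eq_div_iff hD.ne', hbal]
  rw [hsym] at hG hcons ⊢
  linear_combination (1 / 2 : ℝ) * hG - lam * hcons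
end
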